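/- arXiv:1804.07155 — 3 statements merged into one kernel-verified Lean document; each statement's English description precedes it below -/
import Mathlib

section
/- Let X be a finite set of points in Euclidean space ℝ^n, let x_i, x_j ∈ X be distinct, and let X' = X \ {x_i}. Let B = {x ∈ ℝ^n : dist(x, x_i) = dist(x, x_j) and dist(x, x_i) ≤ dist(x, x_k) for all x_k ∈ X \ {x_i, x_j}} be the common border of the Voronoi cells of x_i and x_j. If B has strictly positive (n−1)-dimensional Hausdorff measure, then the Voronoi cell of x_j strictly expands when x_i is removed: V(x_j, X) ⊊ V(x_j, X'). -/
open scoped Classical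

open MeasureTheory Metric

open Module
open scoped NNReal ENNReal RealInnerProductSpace

lemma aux_null {n : ℕ} (W : Submodule ℝ (EuclideanSpace ℝ (Fin n)))
    (hW : (finrank ℝ W : ℝ) < (n : ℝ) - 1) (p : EuclideanSpace ℝ (Fin n)) :
    μH[(n : ℝ) - 1] ((fun w : W => p + (w : EuclideanSpace ℝ (Fin n))) '' Set.univ) = 0 := by
  have hd0 : (0 : ℝ) ≤ (n : ℝ) - 1 := le_trans (by positivity) hW.le
  have hlip : LipschitzWith 1 (fun w : W => p + (w : EuclideanSpace ℝ (Fin n))) := by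
    intro a b
    simp only [edist_dist, dist_eq_norm, ENNReal.coe_one, one_mul, add_sub_add_left_eq_sub]
    rfl
  have h0 : (μH[(n : ℝ) - 1] : Measure W) = 0 := Real.hausdorffMeasure_of_finrank_lt hW
  have := hlip.hausdorffMeasure_image_le hd0 (Set.univ : Set W)
  rw [h0] at this
  simpa using le_antisymm (le_trans this (by simp)) zero_le

lemma dist_eq_iff_inner {n : ℕ} (a b x : EuclideanSpace ℝ (Fin n)) :
    dist x a = dist x b ↔ 2 * ⟪b - a, x⟫ = ‖b‖ ^ 2 - ‖a‖ ^ 2 := by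
  rw [dist_eq_norm, dist_eq_norm, ← Real.sqrt_sq (norm_nonneg (x - a)),
    ← Real.sqrt_sq (norm_nonneg (x - b)), Real.sqrt_inj (by positivity) (by positivity)]
  have ha : ‖x - a‖ ^ 2 = ‖x‖ ^ 2 - 2 * ⟪x, a⟫ + ‖a‖ ^ 2 := by
    rw [@norm_sub_sq_real]
  have hb : ‖x - b‖ ^ 2 = ‖x‖ ^ 2 - 2 * ⟪x, b⟫ + ‖b‖ ^ 2 := by
    rw [@norm_sub_sq_real]
  rw [ha, hb]
  rw [inner_sub_left, real_inner_comm b x, real_inner_comm a x]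
  constructor <;> intro h <;> nlinarith

lemma triple_null {n : ℕ} (xi xj xk : EuclideanSpace ℝ (Fin n))
    (hij : xi ≠ xj) (hik : xk ≠ xi) (hjk : xk ≠ xj) :
    μH[(n : ℝ) - 1] {x | dist x xi = dist x xj ∧ dist x xi = dist x xk} = 0 := by
  have hu0 : (xj - xi : EuclideanSpace ℝ (Fin n)) ≠ 0 := sub_ne_zero.2 (Ne.symm hij)
  have hv0 : (xk - xi : EuclideanSpace ℝ (Fin n)) ≠ 0 := sub_ne_zero.2 hik
  by_cases hsp : (xk - xi : EuclideanSpace ℝ (Fin n)) ∈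
      Submodule.span ℝ ({xj - xi} : Set (EuclideanSpace ℝ (Fin n)))
  · -- degenerate: the set is empty
    obtain ⟨t, ht⟩ := Submodule.mem_span_singleton.1 hsp
    have hAempty : {x : EuclideanSpace ℝ (Fin n) |
        dist x xi = dist x xj ∧ dist x xi = dist x xk} = ∅ := by
      ext x
      simp only [Set.mem_empty_iff_false, iff_false, Set.mem_setOf_eq, not_and]
      intro h1 h2
      rw [dist_eq_iff_inner] at h1 h2
      apply hjk
      have ht0 : t ≠ 0 := by
        rintro rfl; exact hv0 (by rw [← ht, zero_smul])
      have hxk : xk = xi + t • (xj - xi) := by rw [ht]; abel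
      have hxj : xj = xi + (xj - xi) := by abel
      have hnormk : ‖xk‖ ^ 2 = ‖xi‖ ^ 2 + 2 * t * ⟪xi, xj - xi⟫ + t ^ 2 * ‖xj - xi‖ ^ 2 := by
        rw [hxk, @norm_add_sq_real, inner_smul_right, norm_smul, Real.norm_eq_abs, mul_pow,
          sq_abs]
        ring
      have hnormj : ‖xj‖ ^ 2 = ‖xi‖ ^ 2 + 2 * ⟪xi, xj - xi⟫ + ‖xj - xi‖ ^ 2 := by
        conv_lhs => rw [hxj]
        rw [@norm_add_sq_real]
      have hinner : ⟪xk - xi, x⟫ = t * ⟪xj - xi, x⟫ := by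
        rw [← ht, real_inner_smul_left]
      have hn : (0:ℝ) < ‖xj - xi‖ ^ 2 := by
        have := norm_pos_iff.2 hu0; positivity
      have e1 : 2 * ⟪xj - xi, x⟫ = 2 * ⟪xi, xj - xi⟫ + ‖xj - xi‖ ^ 2 := by
        rw [h1, hnormj]; ring
      have e2 : 2 * (t * ⟪xj - xi, x⟫) = 2 * t * ⟪xi, xj - xi⟫ + t ^ 2 * ‖xj - xi‖ ^ 2 := by
        rw [← hinner, h2, hnormk]; ring
      have h4 : (t - t ^ 2) * ‖xj - xi‖ ^ 2 = 0 := by linear_combination e2 - t * e1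
      have h5 : t - t ^ 2 = 0 := by
        rcases mul_eq_zero.1 h4 with h | h
        · exact h
        · exact absurd h hn.ne'
      have ht1 : t = 1 := by
        have : t * (1 - t) = 0 := by ring_nf; linarith [h5]
        rcases mul_eq_zero.1 this with h | h
        · exact absurd h ht0
        · linarith
      rw [hxk, ht1, one_smul]
      conv_rhs => rw [hxj]
    rw [hAempty]; simp
  · -- independent case
    have hind : LinearIndependent ℝ ![xj - xi, xk - xi] := by
      rw [LinearIndependent.pair_iff' hu0]
      intro a hav
      exact hsp (hav ▸ Submodule.smul_mem _ a (Submodule.mem_span_singleton_self _))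
    set W := (Submodule.span ℝ ({xj - xi, xk - xi} : Set (EuclideanSpace ℝ (Fin n))))ᗮ with hW
    have hspan : finrank ℝ
        (Submodule.span ℝ ({xj - xi, xk - xi} : Set (EuclideanSpace ℝ (Fin n)))) = 2 := by
      have hr : ({xj - xi, xk - xi} : Set (EuclideanSpace ℝ (Fin n)))
          = Set.range ![xj - xi, xk - xi] := by
        ext y
        constructor
        · rintro (rfl | rfl)
          · exact ⟨0, rfl⟩
          · exact ⟨1, rfl⟩
        · rintro ⟨i, rfl⟩
          fin_cases i
          · exact Or.inl rfl
          · exact Or.inr rfl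
      rw [hr, finrank_span_eq_card hind]
      simp
    have hrk : finrank ℝ W + 2 = n := by
      have h := Submodule.finrank_add_finrank_orthogonal
        (K := Submodule.span ℝ ({xj - xi, xk - xi} : Set (EuclideanSpace ℝ (Fin n))))
      rw [hspan, finrank_euclideanSpace_fin, ← hW] at h
      omega
    have hWlt : (finrank ℝ W : ℝ) < (n : ℝ) - 1 := by
      have : ((finrank ℝ W : ℝ)) + 2 = (n : ℝ) := by exact_mod_cast hrk
      linarith
    rcases Set.eq_empty_or_nonempty {x : EuclideanSpace ℝ (Fin n) |
        dist x xi = dist x xj ∧ dist x xi = dist x xk} with hAe | ⟨p, hp⟩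
    · rw [hAe]; simp
    · obtain ⟨hp1, hp2⟩ := hp
      have hsub : {x : EuclideanSpace ℝ (Fin n) | dist x xi = dist x xj ∧ dist x xi = dist x xk}
          ⊆ (fun w : W => p + (w : EuclideanSpace ℝ (Fin n))) '' Set.univ := by
        rintro x ⟨hx1, hx2⟩
        have hxW : x - p ∈ W := by
          rw [hW, Submodule.mem_orthogonal]
          intro y hy
          obtain ⟨a, b, hab⟩ := Submodule.mem_span_pair.1 hy
          rw [dist_eq_iff_inner] at hx1 hx2
          rw [dist_eq_iff_inner] at hp1 hp2
          have h1 : ⟪xj - xi, x - p⟫ = 0 := by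
            rw [inner_sub_right]; linarith
          have h2 : ⟪xk - xi, x - p⟫ = 0 := by
            rw [inner_sub_right]; linarith
          rw [← hab, inner_add_left, real_inner_smul_left, real_inner_smul_left, h1, h2]
          ring
        exact ⟨⟨x - p, hxW⟩, Set.mem_univ _, by simp⟩
      exact le_antisymm (le_trans (measure_mono hsub) (le_of_eq (aux_null W hWlt p))) zero_le

/-- The (closed) Voronoi cell of a point `p` with respect to a finite set `S` of points
in Euclidean space: all points at least as close to `p` as to any point of `S`. -/
def voronoiCell {n : ℕ} (S : Finset (EuclideanSpace ℝ (Fin n)))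
    (p : EuclideanSpace ℝ (Fin n)) : Set (EuclideanSpace ℝ (Fin n)) :=
  {x | ∀ q ∈ S, dist x p ≤ dist x q}

/-- Cell expansion: if the common border `B` of the Voronoi cells of `xi` and
`xj` has strictly positive `(n-1)`-dimensional Hausdorff measure, then the Voronoi cell of
`xj` strictly expands when `xi` is removed from the reference set:
`V(xj, X) ⊊ V(xj, X \ {xi})`. -/
theorem voronoi_cell_expansion {n : ℕ} (X : Finset (EuclideanSpace ℝ (Fin n)))
    (xi xj : EuclideanSpace ℝ (Fin n)) (hxi : xi ∈ X) (hxj : xj ∈ X) (hij : xi ≠ xj)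
    (B : Set (EuclideanSpace ℝ (Fin n)))
    (hB : B = {x | dist x xi = dist x xj ∧
      ∀ xk ∈ X, xk ≠ xi → xk ≠ xj → dist x xi ≤ dist x xk})
    (hpos : 0 < μH[(n : ℝ) - 1] B) :
    voronoiCell X xj ⊂ voronoiCell (X.erase xi) xj := by
  constructor
  · intro x hx q hq
    exact hx q (Finset.mem_of_mem_erase hq)
  intro hsub
  -- Step 1: find a border point where all third points are strictly farther.
  have hbex : ∃ b ∈ B, ∀ xk ∈ X, xk ≠ xi → xk ≠ xj → dist b xi < dist b xk := by
    by_contra hcon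
    push_neg at hcon
    set F := X.filter (fun xk => xk ≠ xi ∧ xk ≠ xj) with hF
    have hBsub : B ⊆ ⋃ xk ∈ (F : Set (EuclideanSpace ℝ (Fin n))),
        {x | dist x xi = dist x xj ∧ dist x xi = dist x xk} := by
      intro b hb
      obtain ⟨xk, hkX, hki, hkj, hge⟩ := hcon b hb
      have hble : dist b xi ≤ dist b xk := by
        rw [hB] at hb; exact hb.2 xk hkX hki hkj
      have heq : dist b xi = dist b xk := le_antisymm hble hge
      have hbij : dist b xi = dist b xj := by rw [hB] at hb; exact hb.1
      exact Set.mem_biUnion (by simp [hF, hkX, hki, hkj]) ⟨hbij, heq⟩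
    have hz : μH[(n : ℝ) - 1] (⋃ xk ∈ (F : Set (EuclideanSpace ℝ (Fin n))),
        {x | dist x xi = dist x xj ∧ dist x xi = dist x xk}) = 0 := by
      rw [measure_biUnion_null_iff F.countable_toSet]
      intro xk hk
      simp only [hF, Finset.coe_filter, Set.mem_setOf_eq] at hk
      exact triple_null xi xj xk hij hk.2.1 hk.2.2
    exact absurd (le_trans (measure_mono hBsub) (le_of_eq hz)) (not_le.2 hpos)
  obtain ⟨b, hbB, hbstrict⟩ := hbex
  rw [hB] at hbB
  obtain ⟨hbij, _⟩ := hbB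
  have hbne : b ≠ xi := by
    rintro rfl
    rw [dist_self] at hbij
    exact hij (dist_eq_zero.1 hbij.symm)
  set d := dist b xi with hd
  have hd0 : 0 < d := dist_pos.2 hbne
  -- Step 2: a positive gap ε to all third points.
  obtain ⟨ε, hε0, hεle⟩ : ∃ ε > 0, ∀ xk ∈ X, xk ≠ xi → xk ≠ xj → d + 2 * ε ≤ dist b xk := by
    set F := X.filter (fun xk => xk ≠ xi ∧ xk ≠ xj) with hF
    rcases F.eq_empty_or_nonempty with hFe | hFne
    · refine ⟨1, one_pos, fun xk hk h1 h2 => ?_⟩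
      exact ((Finset.eq_empty_iff_forall_notMem.1 hFe) xk
        (Finset.mem_filter.2 ⟨hk, h1, h2⟩)).elim
    · set m := F.inf' hFne (fun xk => dist b xk) with hm
      have hdm : d < m := by
        rw [hm, Finset.lt_inf'_iff]
        intro xk hk
        obtain ⟨hkX, hki, hkj⟩ := Finset.mem_filter.1 hk
        exact hbstrict xk hkX hki hkj
      refine ⟨(m - d) / 2, by linarith, fun xk hk h1 h2 => ?_⟩
      have : m ≤ dist b xk := Finset.inf'_le _ (Finset.mem_filter.2 ⟨hk, h1, h2⟩)
      linarith
  -- Step 3: perturb b toward xi.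
  set t := min (1/2 : ℝ) (ε / (2 * d)) with htdef
  have ht0 : 0 < t := lt_min (by norm_num) (by positivity)
  have ht1 : t ≤ 1/2 := min_le_left _ _
  have htd : t * d ≤ ε / 2 := by
    have : t ≤ ε / (2 * d) := min_le_right _ _
    calc t * d ≤ ε / (2 * d) * d := mul_le_mul_of_nonneg_right this hd0.le
    _ = ε / 2 := by field_simp
  set x := b + t • (xi - b) with hx
  have hxxi : x - xi = (1 - t) • (b - xi) := by
    rw [hx]; module
  have hxb : x - b = t • (xi - b) := by
    rw [hx]; module
  have hdist_xi : dist x xi = (1 - t) * d := by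
    rw [dist_eq_norm, hxxi, norm_smul, Real.norm_eq_abs, abs_of_nonneg (by linarith)]
    rw [hd, dist_eq_norm]
  have hdist_b : dist x b = t * d := by
    rw [dist_eq_norm, hxb, norm_smul, Real.norm_eq_abs, abs_of_pos ht0]
    rw [hd, dist_eq_norm]
    rw [norm_sub_rev]
  have hdist_xj_ub : dist x xj ≤ d + t * d := by
    calc dist x xj ≤ dist x b + dist b xj := dist_triangle _ _ _
    _ = t * d + d := by rw [hdist_b, ← hbij]
    _ = d + t * d := by ring
  -- x belongs to the cell of xj w.r.t. X.erase xi
  have hxV' : x ∈ voronoiCell (X.erase xi) xj := by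
    intro q hq
    obtain ⟨hqi, hqX⟩ := Finset.mem_erase.1 hq
    rcases eq_or_ne q xj with rfl | hqj
    · exact le_refl _
    · have hqfar : d + 2 * ε ≤ dist b q := hεle q hqX hqi hqj
      have htri : dist b q ≤ dist b x + dist x q := dist_triangle _ _ _
      have hbx : dist b x = t * d := by rw [dist_comm]; exact hdist_b
      calc dist x xj ≤ d + t * d := hdist_xj_ub
      _ ≤ dist x q := by linarith
  -- hence x in cell w.r.t. X, giving dist x xj ≤ dist x xi
  have hxV : x ∈ voronoiCell X xj := hsub hxV'
  have hle : dist x xj ≤ dist x xi := hxV xi hxi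
  -- derive contradiction via strict convexity
  have heq : dist b x + dist x xj = dist b xj := by
    have h1 : dist b xj ≤ dist b x + dist x xj := dist_triangle _ _ _
    have h2 : dist b x + dist x xj ≤ t * d + (1 - t) * d := by
      rw [dist_comm b x, hdist_b]
      linarith [hle, hdist_xi]
    have h3 : t * d + (1 - t) * d = d := by ring
    have h4 : dist b xj = d := hbij.symm
    linarith
  have hwbtw : Wbtw ℝ b x xj := dist_add_dist_eq_iff.1 heq
  obtain ⟨s, hs01, hsx⟩ := hwbtw
  rw [AffineMap.lineMap_apply_module'] at hsx
  -- hsx : s • (xj - b) + b = x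
  have hkey : s • (xj - b) = t • (xi - b) := by
    have : s • (xj - b) = x - b := by rw [← hsx]; abel
    rw [this, hxb]
  have hnorm : s * ‖xj - b‖ = t * ‖xi - b‖ := by
    have := congrArg norm hkey
    rw [norm_smul, norm_smul, Real.norm_eq_abs, Real.norm_eq_abs,
      abs_of_nonneg hs01.1, abs_of_pos ht0] at this
    exact this
  have hnj : ‖xj - b‖ = d := by rw [← dist_eq_norm, dist_comm, ← hbij]
  have hni : ‖xi - b‖ = d := by rw [← dist_eq_norm, dist_comm, ← hd]
  have hst : s = t := by
    rw [hnj, hni] at hnorm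
    exact mul_right_cancel₀ hd0.ne' hnorm
  rw [hst] at hkey
  have : xj - b = xi - b := smul_right_injective _ ht0.ne' hkey
  exact hij (by simpa using this.symm)
end

section
/- For the one-dimensional uniform example, the Balanced Bayes boundary at the intersection of the two densities (b = 3) is strictly suboptimal with respect to the geometric mean: TPR(3)·TNR(3) < TPR(5)·TNR(5), i.e. the squared geometric mean 1/3 at b = 3 is strictly less than the squared geometric mean 25/63 at b = 5. -/
open MeasureTheory

/-- Class-conditional density of the positive class: uniform on `[0, 9]`. -/
noncomputable def pPlus (x : ℝ) : ℝ := if x ∈ Set.Icc (0 : ℝ) 9 then 1 / 9 else 0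

/-- Class-conditional density of the negative class: uniform on `[3, 10]`. -/
noncomputable def pMinus (x : ℝ) : ℝ := if x ∈ Set.Icc (3 : ℝ) 10 then 1 / 7 else 0

/-- True positive rate of the threshold classifier labelling `x` positive iff `x < b`. -/
noncomputable def TPR (b : ℝ) : ℝ := ∫ x in Set.Iio b, pPlus x

/-- True negative rate of the threshold classifier labelling `x` positive iff `x < b`. -/
noncomputable def TNR (b : ℝ) : ℝ := ∫ x in Set.Ici b, pMinus x

lemma pPlus_ind : pPlus = Set.indicator (Set.Icc (0:ℝ) 9) (fun _ => (1/9:ℝ)) := by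
  funext x; simp [pPlus, Set.indicator_apply]

lemma pMinus_ind : pMinus = Set.indicator (Set.Icc (3:ℝ) 10) (fun _ => (1/7:ℝ)) := by
  funext x; simp [pMinus, Set.indicator_apply]

lemma TPR_eval (b : ℝ) : TPR b = ∫ x in Set.Iio b ∩ Set.Icc (0:ℝ) 9, (1/9:ℝ) := by
  rw [TPR, pPlus_ind, setIntegral_indicator measurableSet_Icc]

lemma TNR_eval (b : ℝ) : TNR b = ∫ x in Set.Ici b ∩ Set.Icc (3:ℝ) 10, (1/7:ℝ) := by
  rw [TNR, pMinus_ind, setIntegral_indicator measurableSet_Icc]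

lemma TPR3 : TPR 3 = 1/3 := by
  rw [TPR_eval]
  have h : Set.Iio (3:ℝ) ∩ Set.Icc (0:ℝ) 9 = Set.Ico (0:ℝ) 3 := by
    ext x; constructor
    · rintro ⟨h1, h2, _⟩; exact ⟨h2, h1⟩
    · rintro ⟨h1, h2⟩; exact ⟨h2, h1, by linarith⟩
  rw [h, setIntegral_const, Real.volume_real_Ico]
  norm_num

lemma TNR3 : TNR 3 = 1 := by
  rw [TNR_eval]
  have h : Set.Ici (3:ℝ) ∩ Set.Icc (3:ℝ) 10 = Set.Icc (3:ℝ) 10 := by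
    ext x; simp [Set.mem_Icc]
  rw [h, setIntegral_const, Real.volume_real_Icc]
  norm_num

lemma TPR5 : TPR 5 = 5/9 := by
  rw [TPR_eval]
  have h : Set.Iio (5:ℝ) ∩ Set.Icc (0:ℝ) 9 = Set.Ico (0:ℝ) 5 := by
    ext x; constructor
    · rintro ⟨h1, h2, _⟩; exact ⟨h2, h1⟩
    · rintro ⟨h1, h2⟩; exact ⟨h2, h1, by linarith⟩
  rw [h, setIntegral_const, Real.volume_real_Ico]
  norm_num

lemma TNR5 : TNR 5 = 5/7 := by
  rw [TNR_eval]
  have h : Set.Ici (5:ℝ) ∩ Set.Icc (3:ℝ) 10 = Set.Icc (5:ℝ) 10 := by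
    ext x; simp [Set.mem_Icc]; intro h1 _; linarith
  rw [h, setIntegral_const, Real.volume_real_Icc]
  norm_num

/-- the Balanced Bayes boundary `b = 3` (the intersection of the densities)
is strictly suboptimal with respect to the geometric mean: the squared geometric mean
`1/3` at `b = 3` is strictly less than the squared geometric mean `25/63` at `b = 5`. -/
theorem balancedBayes_suboptimal :
    TPR 3 * TNR 3 < TPR 5 * TNR 5 ∧ TPR 3 * TNR 3 = 1 / 3 ∧ TPR 5 * TNR 5 = 25 / 63 := by
  rw [TPR3, TNR3, TPR5, TNR5]
  norm_num
end

section
/- For the one-dimensional uniform example, let π₊, π₋ be prior probabilities with π₊ > 0, π₋ > 0, π₊ + π₋ = 1 and 7·π₊ ≠ 9·π₋ (so that the scaled densities π₊·p₊ and π₋·p₋ have unequal heights on their overlap). Define the classification error of the threshold classifier with boundary b as err(b) = π₊·(1 − TPR(b)) + π₋·(1 − TNR(b)). Then every b* ∈ [0, 10] that minimizes err over [0, 10] (i.e., every Bayes-optimal threshold) satisfies TPR(b*)·TNR(b*) < 25/63 = TPR(5)·TNR(5); that is, the Bayes classifier is strictly suboptimal with respect to the geometric mean. -/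
open MeasureTheory

/-- Expected classification error of the threshold classifier with boundary `b`,
given priors `πpos` and `πneg` for the positive and negative class. -/
noncomputable def err (πpos πneg b : ℝ) : ℝ := πpos * (1 - TPR b) + πneg * (1 - TNR b)

lemma pPlus_eq : pPlus = Set.indicator (Set.Icc (0:ℝ) 9) (fun _ => (1:ℝ)/9) := by
  funext x; simp [pPlus, Set.indicator]

lemma pMinus_eq : pMinus = Set.indicator (Set.Icc (3:ℝ) 10) (fun _ => (1:ℝ)/7) := by
  funext x; simp [pMinus, Set.indicator]

lemma TPR_eq (b : ℝ) (hb : 0 ≤ b) : TPR b = min b 9 / 9 := by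
  rw [TPR, pPlus_eq, setIntegral_indicator measurableSet_Icc, setIntegral_const]
  rcases le_or_gt b 9 with h | h
  · have : Set.Iio b ∩ Set.Icc (0:ℝ) 9 = Set.Ico 0 b := by
      ext x; constructor
      · rintro ⟨hx, hx0, _⟩; exact ⟨hx0, hx⟩
      · rintro ⟨hx0, hx⟩; exact ⟨hx, hx0, le_trans hx.le h⟩
    rw [this, Real.volume_real_Ico_of_le hb, min_eq_left h]
    simp; ring
  · have : Set.Iio b ∩ Set.Icc (0:ℝ) 9 = Set.Icc 0 9 := by
      rw [Set.inter_eq_right]; intro x hx; exact lt_of_le_of_lt hx.2 h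
    rw [this, Real.volume_real_Icc_of_le (by norm_num), min_eq_right h.le]
    norm_num

lemma TNR_eq (b : ℝ) (hb : b ≤ 10) : TNR b = (10 - max b 3) / 7 := by
  rw [TNR, pMinus_eq, setIntegral_indicator measurableSet_Icc, setIntegral_const]
  have : Set.Ici b ∩ Set.Icc (3:ℝ) 10 = Set.Icc (max b 3) 10 := by
    ext x; constructor
    · rintro ⟨hx, hx3, hx10⟩; exact ⟨max_le hx hx3, hx10⟩
    · rintro ⟨hx, hx10⟩; exact ⟨le_trans (le_max_left _ _) hx,
        le_trans (le_max_right _ _) hx, hx10⟩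
  rw [this, Real.volume_real_Icc_of_le (by
    have := le_max_left b 3; have := max_le hb (by norm_num : (3:ℝ) ≤ 10); linarith)]
  simp; ring

/-- for priors `π₊, π₋ > 0` with `π₊ + π₋ = 1` and `7π₊ ≠ 9π₋` (unequal
heights of the scaled densities on the overlap), every Bayes-optimal threshold
`b* ∈ [0, 10]` (a minimizer of `err` over `[0, 10]`) is strictly suboptimal with respect
to the geometric mean: `TPR(b*)·TNR(b*) < 25/63 = TPR(5)·TNR(5)`. -/
theorem bayes_threshold_gm_suboptimal (πpos πneg : ℝ)
    (hπpos : 0 < πpos) (hπneg : 0 < πneg) (hsum : πpos + πneg = 1)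
    (hne : 7 * πpos ≠ 9 * πneg) :
    ∀ bstar ∈ Set.Icc (0 : ℝ) 10,
      (∀ b ∈ Set.Icc (0 : ℝ) 10, err πpos πneg bstar ≤ err πpos πneg b) →
        TPR bstar * TNR bstar < 25 / 63 ∧ TPR 5 * TNR 5 = 25 / 63 := by
  have hT5 : TPR 5 = 5 / 9 := by rw [TPR_eq 5 (by norm_num)]; norm_num
  have hN5 : TNR 5 = 5 / 7 := by rw [TNR_eq 5 (by norm_num)]; norm_num
  intro bstar ⟨hb0, hb10⟩ hmin
  have hne5 : bstar ≠ 5 := by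
    intro h; subst h
    rcases lt_or_gt_of_ne hne with hlt | hgt
    · -- 7πpos < 9πneg : err 3 < err 5
      have h3 := hmin 3 (by norm_num)
      rw [err, err, hT5, hN5, TPR_eq 3 (by norm_num), TNR_eq 3 (by norm_num)] at h3
      norm_num at h3
      nlinarith
    · have h9 := hmin 9 (by norm_num)
      rw [err, err, hT5, hN5, TPR_eq 9 (by norm_num), TNR_eq 9 (by norm_num)] at h9
      norm_num at h9
      nlinarith
  refine ⟨?_, by rw [hT5, hN5]; norm_num⟩
  rw [TPR_eq bstar hb0, TNR_eq bstar hb10]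
  rcases le_or_gt bstar 3 with h3 | h3
  · rw [min_eq_left (by linarith), max_eq_right h3]
    nlinarith
  · rcases le_or_gt bstar 9 with h9 | h9
    · rw [min_eq_left h9, max_eq_left h3.le]
      have hz : bstar - 5 ≠ 0 := sub_ne_zero.mpr hne5
      have : (bstar - 5)^2 > 0 := by positivity
      nlinarith
    · rw [min_eq_right h9.le, max_eq_left (by linarith)]
      nlinarith
end
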